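/- For i = 1, 2 let U_i ∈ ℝ^{d₁×r} and V_i ∈ ℝ^{d₂×r}. Then for every orthogonal matrix R ∈ ℝ^{r×r} (RᵀR = R Rᵀ = I_r): ‖U₁V₁ᵀ − U₂V₂ᵀ‖_F² ≤ 2 · (‖V₂‖₂² · ‖U₁ − U₂R‖_F² + ‖U₁‖₂² · ‖V₁ − V₂R‖_F²), where ‖·‖_F denotes the Frobenius norm and ‖·‖₂ the spectral (operator) norm. -/
import Mathlib


open Matrix BigOperators Finset

/-- Frobenius norm of a real matrix. -/
noncomputable def frobNorm {m n : Type*} [Fintype m] [Fintype n] (A : Matrix m n ℝ) : ℝ :=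
  Real.sqrt (∑ i, ∑ j, (A i j) ^ 2)

/-- Spectral (operator) norm of a real matrix: the supremum of `‖A x‖₂` over
Euclidean unit vectors `x`. -/
noncomputable def specNorm {m n : Type*} [Fintype m] [Fintype n] (A : Matrix m n ℝ) : ℝ :=
  sSup {c | ∃ x : n → ℝ, (∑ j, (x j) ^ 2) = 1 ∧ c = Real.sqrt (∑ i, (A.mulVec x i) ^ 2)}

lemma frobNorm_sq {m n : Type*} [Fintype m] [Fintype n] (A : Matrix m n ℝ) :
    frobNorm A ^ 2 = ∑ i, ∑ j, (A i j) ^ 2 := by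
  rw [frobNorm, Real.sq_sqrt]
  positivity

lemma specNorm_nonneg {m n : Type*} [Fintype m] [Fintype n] (A : Matrix m n ℝ) :
    0 ≤ specNorm A := by
  apply Real.sSup_nonneg
  rintro c ⟨x, hx, rfl⟩
  positivity

lemma specNorm_bddAbove {m n : Type*} [Fintype m] [Fintype n] (A : Matrix m n ℝ) :
    BddAbove {c | ∃ x : n → ℝ, (∑ j, (x j) ^ 2) = 1 ∧
      c = Real.sqrt (∑ i, (A.mulVec x i) ^ 2)} := by
  refine ⟨Real.sqrt (∑ i, ∑ j, (A i j) ^ 2), ?_⟩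
  rintro c ⟨x, hx, rfl⟩
  apply Real.sqrt_le_sqrt
  apply Finset.sum_le_sum
  intro i _
  have h1 : A.mulVec x i = ∑ j, A i j * x j := by
    simp [Matrix.mulVec, dotProduct]
  calc (A.mulVec x i) ^ 2 = (∑ j, A i j * x j) ^ 2 := by rw [h1]
    _ ≤ (∑ j, (A i j) ^ 2) * (∑ j, (x j) ^ 2) :=
        Finset.sum_mul_sq_le_sq_mul_sq Finset.univ _ _
    _ = ∑ j, (A i j) ^ 2 := by rw [hx, mul_one]

lemma sqrt_le_specNorm {m n : Type*} [Fintype m] [Fintype n] (A : Matrix m n ℝ)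
    (x : n → ℝ) (hx : ∑ j, (x j) ^ 2 = 1) :
    Real.sqrt (∑ i, (A.mulVec x i) ^ 2) ≤ specNorm A :=
  le_csSup (specNorm_bddAbove A) ⟨x, hx, rfl⟩

lemma mulVec_sq_le {m n : Type*} [Fintype m] [Fintype n] (A : Matrix m n ℝ) (x : n → ℝ) :
    ∑ i, (A.mulVec x i) ^ 2 ≤ specNorm A ^ 2 * ∑ j, (x j) ^ 2 := by
  by_cases hx : ∑ j, (x j) ^ 2 = 0
  · have hx0 : x = 0 := by
      funext j
      have := (Finset.sum_eq_zero_iff_of_nonneg (fun j _ => sq_nonneg (x j))).mp hx j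
        (Finset.mem_univ j)
      exact pow_eq_zero_iff two_ne_zero |>.mp this
    simp [hx0, Matrix.mulVec_zero]
  · have hxpos : 0 < ∑ j, (x j) ^ 2 :=
      lt_of_le_of_ne (Finset.sum_nonneg fun j _ => sq_nonneg _) (Ne.symm hx)
    set c := Real.sqrt (∑ j, (x j) ^ 2) with hc
    have hcpos : 0 < c := Real.sqrt_pos.mpr hxpos
    have hc2 : c ^ 2 = ∑ j, (x j) ^ 2 := Real.sq_sqrt hxpos.le
    set y : n → ℝ := c⁻¹ • x with hy
    have hyunit : ∑ j, (y j) ^ 2 = 1 := by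
      simp only [hy, Pi.smul_apply, smul_eq_mul, mul_pow, ← Finset.mul_sum]
      rw [← hc2]
      field_simp
    have hAy : ∑ i, (A.mulVec y i) ^ 2 ≤ specNorm A ^ 2 := by
      have h := sqrt_le_specNorm A y hyunit
      have := pow_le_pow_left₀ (Real.sqrt_nonneg _) h 2
      rwa [Real.sq_sqrt (Finset.sum_nonneg fun i _ => sq_nonneg _)] at this
    have hxy : x = c • y := by
      rw [hy, smul_smul, mul_inv_cancel₀ hcpos.ne', one_smul]
    have hAx : ∀ i, A.mulVec x i = c * A.mulVec y i := by
      intro i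
      rw [hxy, Matrix.mulVec_smul]
      simp
    calc ∑ i, (A.mulVec x i) ^ 2 = c ^ 2 * ∑ i, (A.mulVec y i) ^ 2 := by
          simp only [hAx, mul_pow, ← Finset.mul_sum]
      _ ≤ c ^ 2 * specNorm A ^ 2 := by
          exact mul_le_mul_of_nonneg_left hAy (sq_nonneg c)
      _ = specNorm A ^ 2 * ∑ j, (x j) ^ 2 := by rw [hc2]; ring

lemma frob_mul_transpose_le {m n r : ℕ} (A : Matrix (Fin m) (Fin r) ℝ)
    (B : Matrix (Fin n) (Fin r) ℝ) :
    ∑ i, ∑ j, ((A * Bᵀ) i j) ^ 2 ≤ specNorm B ^ 2 * ∑ i, ∑ k, (A i k) ^ 2 := by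
  rw [Finset.mul_sum]
  apply Finset.sum_le_sum
  intro i _
  have h : ∀ j, (A * Bᵀ) i j = B.mulVec (A i) j := by
    intro j
    simp [Matrix.mul_apply, Matrix.mulVec, dotProduct, mul_comm]
  calc ∑ j, ((A * Bᵀ) i j) ^ 2 = ∑ j, (B.mulVec (A i) j) ^ 2 := by simp only [h]
    _ ≤ specNorm B ^ 2 * ∑ k, (A i k) ^ 2 := mulVec_sq_le B (A i)

lemma specNorm_mul_orth_le {n r : ℕ} (V : Matrix (Fin n) (Fin r) ℝ)
    (R : Matrix (Fin r) (Fin r) ℝ) (hR₁ : Rᵀ * R = 1) :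
    specNorm (V * R) ≤ specNorm V := by
  have hnorm : ∀ x : Fin r → ℝ, ∑ j, (R.mulVec x j) ^ 2 = ∑ j, (x j) ^ 2 := by
    intro x
    have h1 : ∑ j, (R.mulVec x j) ^ 2 = R.mulVec x ⬝ᵥ R.mulVec x := by
      simp [dotProduct, sq]
    have h2 : ∑ j, (x j) ^ 2 = x ⬝ᵥ x := by
      simp [dotProduct, sq]
    rw [h1, h2, Matrix.dotProduct_mulVec, ← Matrix.mulVec_transpose,
      Matrix.mulVec_mulVec, hR₁, Matrix.one_mulVec]
  have hsub : {c | ∃ x : Fin r → ℝ, (∑ j, (x j) ^ 2) = 1 ∧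
      c = Real.sqrt (∑ i, ((V * R).mulVec x i) ^ 2)} ⊆
      {c | ∃ x : Fin r → ℝ, (∑ j, (x j) ^ 2) = 1 ∧
      c = Real.sqrt (∑ i, (V.mulVec x i) ^ 2)} := by
    rintro c ⟨x, hx, rfl⟩
    refine ⟨R.mulVec x, by rw [hnorm]; exact hx, ?_⟩
    rw [← Matrix.mulVec_mulVec]
  by_cases hne : {c | ∃ x : Fin r → ℝ, (∑ j, (x j) ^ 2) = 1 ∧
      c = Real.sqrt (∑ i, ((V * R).mulVec x i) ^ 2)}.Nonempty
  · exact csSup_le_csSup (specNorm_bddAbove V) hne hsub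
  · rw [specNorm, Set.not_nonempty_iff_eq_empty.mp hne, Real.sSup_empty]
    exact specNorm_nonneg V

/-- Main chain of estimates in the proof of Proposition S.4: for every `r × r`
orthogonal matrix `R`,
`‖U₁V₁ᵀ − U₂V₂ᵀ‖_F² ≤ 2 (‖V₂‖₂² ‖U₁ − U₂R‖_F² + ‖U₁‖₂² ‖V₁ − V₂R‖_F²)`. -/
theorem factored_diff_frobNorm_sq_bound {d₁ d₂ r : ℕ}
    (U₁ U₂ : Matrix (Fin d₁) (Fin r) ℝ) (V₁ V₂ : Matrix (Fin d₂) (Fin r) ℝ)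
    (R : Matrix (Fin r) (Fin r) ℝ) (hR₁ : Rᵀ * R = 1) (hR₂ : R * Rᵀ = 1) :
    (frobNorm (U₁ * V₁ᵀ - U₂ * V₂ᵀ)) ^ 2
      ≤ 2 * ((specNorm V₂) ^ 2 * (frobNorm (U₁ - U₂ * R)) ^ 2
              + (specNorm U₁) ^ 2 * (frobNorm (V₁ - V₂ * R)) ^ 2) := by
  set A := U₁ - U₂ * R with hA
  set C := V₁ - V₂ * R with hC
  have key : U₁ * V₁ᵀ - U₂ * V₂ᵀ = A * (V₂ * R)ᵀ + U₁ * Cᵀ := by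
    simp only [hA, hC, Matrix.transpose_mul, Matrix.transpose_sub, Matrix.sub_mul,
      Matrix.mul_sub, Matrix.mul_assoc]
    rw [← Matrix.mul_assoc R Rᵀ V₂ᵀ, hR₂, Matrix.one_mul]
    abel
  rw [key, frobNorm_sq, frobNorm_sq, frobNorm_sq]
  have step1 : ∑ i, ∑ j, ((A * (V₂ * R)ᵀ + U₁ * Cᵀ) i j) ^ 2
      ≤ 2 * (∑ i, ∑ j, ((A * (V₂ * R)ᵀ) i j) ^ 2) + 2 * (∑ i, ∑ j, ((U₁ * Cᵀ) i j) ^ 2) := by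
    rw [Finset.mul_sum, Finset.mul_sum, ← Finset.sum_add_distrib]
    apply Finset.sum_le_sum
    intro i _
    rw [Finset.mul_sum, Finset.mul_sum, ← Finset.sum_add_distrib]
    apply Finset.sum_le_sum
    intro j _
    have : (A * (V₂ * R)ᵀ + U₁ * Cᵀ) i j = (A * (V₂ * R)ᵀ) i j + (U₁ * Cᵀ) i j := rfl
    rw [this]
    nlinarith [sq_nonneg ((A * (V₂ * R)ᵀ) i j - (U₁ * Cᵀ) i j)]
  have b1 : ∑ i, ∑ j, ((A * (V₂ * R)ᵀ) i j) ^ 2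
      ≤ specNorm V₂ ^ 2 * ∑ i, ∑ k, (A i k) ^ 2 := by
    calc ∑ i, ∑ j, ((A * (V₂ * R)ᵀ) i j) ^ 2
        ≤ specNorm (V₂ * R) ^ 2 * ∑ i, ∑ k, (A i k) ^ 2 := frob_mul_transpose_le A (V₂ * R)
      _ ≤ specNorm V₂ ^ 2 * ∑ i, ∑ k, (A i k) ^ 2 := by
          apply mul_le_mul_of_nonneg_right
          · exact pow_le_pow_left₀ (specNorm_nonneg _) (specNorm_mul_orth_le V₂ R hR₁) 2
          · exact Finset.sum_nonneg fun i _ => Finset.sum_nonneg fun k _ => sq_nonneg _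
  have b2 : ∑ i, ∑ j, ((U₁ * Cᵀ) i j) ^ 2
      ≤ specNorm U₁ ^ 2 * ∑ i, ∑ k, (C i k) ^ 2 := by
    have h := frob_mul_transpose_le (m := d₂) Cᵀᵀ U₁
    rw [Matrix.transpose_transpose] at h
    calc ∑ i, ∑ j, ((U₁ * Cᵀ) i j) ^ 2
        = ∑ i, ∑ j, ((C * U₁ᵀ) j i) ^ 2 := by
          apply Finset.sum_congr rfl; intro i _
          apply Finset.sum_congr rfl; intro j _
          rw [show (C * U₁ᵀ) j i = (U₁ * Cᵀ) i j by
            simp [Matrix.mul_apply, mul_comm]]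
      _ = ∑ j, ∑ i, ((C * U₁ᵀ) j i) ^ 2 := Finset.sum_comm
      _ ≤ specNorm U₁ ^ 2 * ∑ i, ∑ k, (C i k) ^ 2 := h
  linarith
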